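/- arXiv:2109.05282 — 2 statements merged into one kernel-verified Lean document; each statement's English description precedes it below -/
import Mathlib

section
/- Let G ∈ C_b^1(ℝ^d, ℝ^d) and let C^1_{T,d} denote continuously differentiable paths from [0,T] to ℝ^d. Define g(t,ω) = ∫_0^t G(ω(r))·dω(r) (a Riemann–Stieltjes integral against the smooth path ω). Then for every (t,ω) ∈ [0,T]×C^1_{T,d} and every τ ∈ [0,t), g is strongly vertically differentiable at (τ,t,ω) with ∂_{ω_τ} g(t,ω) = G(ω(τ)) + ∫_τ^t DG(ω(r)) dω(r). -/
open Set MeasureTheory intervalIntegral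
open scoped RealInnerProductSpace
noncomputable section

abbrev EV (d : ℕ) := EuclideanSpace ℝ (Fin d)

/-- For `G ∈ C¹_b(ℝ^d,ℝ^d)`, a `C¹` path `ω` and `g(t,ω) = ∫_0^t G(ω(r))·dω(r)`, the
functional `g` is strongly vertically differentiable at every `(τ,t,ω)` with `τ < t`,
where the perturbed integral is interpreted as
`∫_0^τ G(ω)·dω + G(ω(τ))·x + ∫_τ^t G(ω(r)+x)·dω(r)`, and
`∂_{ω_τ} g(t,ω) = G(ω(τ)) + ∫_τ^t DG(ω(r)) dω(r)`. -/
theorem stmt_5 {d : ℕ} (T : ℝ) (hT : 0 < T)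
    (G : EV d → EV d) (hG : ContDiff ℝ 1 G)
    (hGb : ∃ M : ℝ, ∀ x, ‖G x‖ ≤ M ∧ ‖fderiv ℝ G x‖ ≤ M)
    (ω : ℝ → EV d) (hω : ContDiff ℝ 1 ω)
    (τ t : ℝ) (hτ : 0 ≤ τ) (hτt : τ < t) (htT : t ≤ T) :
    ∃ D : EV d →L[ℝ] ℝ,
      HasFDerivAt
        (fun x : EV d =>
          (∫ r in (0:ℝ)..τ, ⟪G (ω r), deriv ω r⟫) + ⟪G (ω τ), x⟫ +
            ∫ r in τ..t, ⟪G (ω r + x), deriv ω r⟫) D 0 ∧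
      ∀ v : EV d, D v = ⟪G (ω τ), v⟫ + ∫ r in τ..t, ⟪fderiv ℝ G (ω r) v, deriv ω r⟫ := by
  obtain ⟨M, hM⟩ := hGb
  have hGd : Differentiable ℝ G := hG.differentiable one_ne_zero
  have hωc : Continuous ω := hω.continuous
  have hω' : Continuous (deriv ω) := (hω.continuous_deriv le_rfl)
  have hfd : Continuous (fderiv ℝ G) := hG.continuous_fderiv one_ne_zero
  -- the parametric family and its derivative
  set F : EV d → ℝ → ℝ := fun x r => ⟪G (ω r + x), deriv ω r⟫ with hF
  set F' : EV d → ℝ → EV d →L[ℝ] ℝ := fun x r =>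
    (innerSL ℝ (deriv ω r)).comp (fderiv ℝ G (ω r + x)) with hF'
  have hFcont : ∀ x, Continuous (F x) := fun x =>
    (hGd.continuous.comp (hωc.add continuous_const)).inner hω'
  have hF'cont : ∀ x, Continuous (F' x) := fun x => by
    exact ((innerSL ℝ).continuous.comp hω').clm_comp
      (hfd.comp (hωc.add continuous_const))
  have hdiff : ∀ x r, HasFDerivAt (fun y => F y r) (F' x r) x := by
    intro x r
    have h1 : HasFDerivAt (fun y : EV d => ω r + y) (ContinuousLinearMap.id ℝ (EV d)) x :=
      (hasFDerivAt_id x).const_add (ω r)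
    have h2 : HasFDerivAt (fun y : EV d => G (ω r + y)) (fderiv ℝ G (ω r + x)) x := by
      have h2' := (hGd (ω r + x)).hasFDerivAt.comp x h1
      rwa [ContinuousLinearMap.comp_id] at h2'
    have h3 := (innerSL ℝ (deriv ω r)).hasFDerivAt.comp x h2
    have h4 : (fun y : EV d => F y r) = (⇑((innerSL ℝ) (deriv ω r)) ∘ fun y => G (ω r + y)) := by
      funext y
      simp only [hF, Function.comp_apply, innerSL_apply_apply]
      exact real_inner_comm _ _
    rw [h4]
    exact h3
  have hbound : ∀ x r, ‖F' x r‖ ≤ M * ‖deriv ω r‖ := by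
    intro x r
    calc ‖F' x r‖ ≤ ‖innerSL ℝ (deriv ω r)‖ * ‖fderiv ℝ G (ω r + x)‖ :=
          ContinuousLinearMap.opNorm_comp_le _ _
      _ ≤ ‖deriv ω r‖ * M := by
          rw [innerSL_apply_norm]
          exact mul_le_mul_of_nonneg_left (hM _).2 (norm_nonneg _)
      _ = M * ‖deriv ω r‖ := mul_comm _ _
  have key : HasFDerivAt (fun x : EV d => ∫ r in τ..t, F x r)
      (∫ r in τ..t, F' 0 r) 0 := by
    apply intervalIntegral.hasFDerivAt_integral_of_dominated_of_fderiv_le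
      (bound := fun r => M * ‖deriv ω r‖) (s := Set.univ) Filter.univ_mem
    · filter_upwards with x using (hFcont x).aestronglyMeasurable
    · exact (hFcont 0).intervalIntegrable τ t
    · exact (hF'cont 0).aestronglyMeasurable
    · filter_upwards with r _ x _ using hbound x r
    · exact ((continuous_const.mul hω'.norm)).intervalIntegrable τ t
    · filter_upwards with r _ x _ using hdiff x r
  have hF'int : IntervalIntegrable (F' 0) MeasureTheory.volume τ t :=
    (hF'cont 0).intervalIntegrable τ t
  refine ⟨innerSL ℝ (G (ω τ)) + ∫ r in τ..t, F' 0 r, ?_, ?_⟩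
  · have h0 : HasFDerivAt (fun _ : EV d => (∫ r in (0:ℝ)..τ, ⟪G (ω r), deriv ω r⟫))
        (0 : EV d →L[ℝ] ℝ) 0 := hasFDerivAt_const _ _
    have h1 : HasFDerivAt (fun x : EV d => ⟪G (ω τ), x⟫) (innerSL ℝ (G (ω τ))) 0 :=
      (innerSL ℝ (G (ω τ))).hasFDerivAt
    have := (h0.add h1).add key
    rw [zero_add] at this
    exact this
  · intro v
    have happ : (∫ r in τ..t, F' 0 r) v = ∫ r in τ..t, F' 0 r v :=
      ContinuousLinearMap.intervalIntegral_apply hF'int v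
    rw [ContinuousLinearMap.add_apply, happ, innerSL_apply_apply]
    congr 1
    apply intervalIntegral.integral_congr
    intro r _
    simp only [hF', ContinuousLinearMap.comp_apply, innerSL_apply_apply, add_zero]
    exact real_inner_comm _ _
end
end

section
/- Let H ∈ C_b^2(ℝ, ℝ^d) and for a C^1 path ω: [0,T]→ℝ^d let x(·) solve the ODE x(t) = ∫_0^t H(x(r))·dω(r). Define φ(t,ω) := x(t). Then φ is strongly vertically differentiable at every (τ,t,ω) with τ ≤ t, and the derivative y(t) := ∂_{ω_τ}φ(t,ω) ∈ ℝ^d solves the linear ODE y(t) = H(x(τ)) + ∫_τ^t y(r) H'(x(r))·dω(r) for t ≥ τ. -/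
open Set MeasureTheory intervalIntegral
open scoped RealInnerProductSpace
noncomputable section

open Filter Real Topology

/-- Bootstrap: a solution of an integral equation with bounded continuous-in-both-args
integrand is automatically continuous on `[a,b]`. -/
lemma bootstrap_cont {G : ℝ → ℝ → ℝ} (hG : Continuous fun p : ℝ × ℝ => G p.1 p.2)
    {C : ℝ} {a b c : ℝ} (hGb : ∀ v : ℝ, ∀ r ∈ Icc a b, |G v r| ≤ C)
    (hab : a ≤ b) {u : ℝ → ℝ}
    (hu : ∀ s ∈ Icc a b, u s = c + ∫ r in a..s, G (u r) r) :
    ContinuousOn u (Icc a b) := by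
  set f : ℝ → ℝ := fun r => G (u r) r with hf
  have key : ∀ s ∈ Icc a b, u s = c + ∫ r in Ioc a s, f r := by
    intro s hs
    rw [hu s hs, intervalIntegral.integral_of_le hs.1]
  set A : Set ℝ := {s | s ∈ Icc a b ∧ IntegrableOn f (Ioc a s)} with hA
  have hA0 : a ∈ A := ⟨left_mem_Icc.2 hab, by simp [IntegrableOn]⟩
  have hAdc : ∀ s' ∈ A, ∀ s, a ≤ s → s ≤ s' → s ∈ A := by
    intro s' hs' s h1 h2
    exact ⟨⟨h1, h2.trans hs'.1.2⟩, hs'.2.mono_set (Ioc_subset_Ioc le_rfl h2)⟩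
  have hlip : ∀ s ∈ A, ∀ s' ∈ A, s ≤ s' → |u s' - u s| ≤ C * (s' - s) := by
    intro s hs s' hs' hss
    have hsplit : Ioc a s' = Ioc a s ∪ Ioc s s' := (Ioc_union_Ioc_eq_Ioc hs.1.1 hss).symm
    have hi2 : IntegrableOn f (Ioc s s') := hs'.2.mono_set (Ioc_subset_Ioc hs.1.1 le_rfl)
    have : u s' - u s = ∫ r in Ioc s s', f r := by
      rw [key s hs.1, key s' hs'.1, hsplit,
        setIntegral_union (Set.Ioc_disjoint_Ioc_of_le le_rfl) measurableSet_Ioc hs.2 hi2]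
      ring
    rw [this]
    have hb : ∀ r ∈ Ioc s s', ‖f r‖ ≤ C := by
      intro r hr
      exact hGb (u r) r ⟨hs.1.1.trans hr.1.le, hr.2.trans hs'.1.2⟩
    calc |∫ r in Ioc s s', f r| ≤ C * (volume (Ioc s s')).toReal :=
          norm_setIntegral_le_of_norm_le_const (by simp [Real.volume_Ioc])
            hb
      _ = C * (s' - s) := by rw [Real.volume_Ioc, ENNReal.toReal_ofReal (sub_nonneg.2 hss)]
  have hCnn : 0 ≤ C := (abs_nonneg _).trans (hGb (u a) a (left_mem_Icc.2 hab))
  have hlipOn : LipschitzOnWith (Real.toNNReal C) u A := by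
    apply LipschitzOnWith.of_dist_le_mul
    intro s hs t ht
    rw [Real.dist_eq, Real.dist_eq, Real.coe_toNNReal _ hCnn]
    rcases le_total t s with hts | hst
    · calc |u s - u t| ≤ C * (s - t) := hlip t ht s hs hts
        _ ≤ C * |s - t| := by gcongr; exact le_abs_self _
    · rw [abs_sub_comm (u s), abs_sub_comm s]
      calc |u t - u s| ≤ C * (t - s) := hlip s hs t ht hst
        _ ≤ C * |t - s| := by gcongr; exact le_abs_self _
  have hbdd : BddAbove A := ⟨b, fun s hs => hs.1.2⟩
  have hane : A.Nonempty := ⟨a, hA0⟩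
  set β := sSup A with hβ
  have hβb : β ≤ b := csSup_le hane fun s hs => hs.1.2
  have hIco : Ico a β ⊆ A := by
    intro s hs
    obtain ⟨t, ht, hst⟩ := exists_lt_of_lt_csSup hane hs.2
    exact hAdc t ht s hs.1 hst.le
  -- u is a.e. strongly measurable on (a, b]
  have humeas : AEStronglyMeasurable u (volume.restrict (Ioc a b)) := by
    have hsplit : Ioc a b = (Ioc a b ∩ Iio β) ∪ (Ioc a b ∩ Ici β) := by
      rw [← inter_union_distrib_left, Iio_union_Ici, inter_univ]
    rw [hsplit]
    rw [aestronglyMeasurable_union_iff]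
    constructor
    · refine ((hlipOn.continuousOn).mono ?_).aestronglyMeasurable
        (measurableSet_Ioc.inter measurableSet_Iio)
      intro s hs
      exact hIco ⟨hs.1.1.le, hs.2⟩
    · have hae : ∀ᵐ s ∂(volume.restrict (Ioc a b ∩ Ici β)), u s = c := by
        have h1 : ∀ᵐ (s : ℝ) ∂(volume.restrict (Ioc a b ∩ Ici β)), s ≠ β := by
          refine ae_restrict_of_ae ?_
          rw [ae_iff]
          convert Real.volume_singleton (a := β) using 2
          ext s; simp
        have h2 := ae_restrict_mem (μ := volume) (show MeasurableSet (Ioc a b ∩ Ici β) from measurableSet_Ioc.inter measurableSet_Ici)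
        filter_upwards [h1, h2] with s hsne hsmem
        have hsA : s ∉ A := by
          intro hsA
          have : s ≤ β := le_csSup hbdd hsA
          rcases this.lt_or_eq with h | h
          · exact absurd hsmem.2 (not_le.2 h)
          · exact hsne h
        have hni : ¬ IntegrableOn f (Ioc a s) := fun h => hsA ⟨⟨hsmem.1.1.le, hsmem.1.2⟩, h⟩
        rw [key s ⟨hsmem.1.1.le, hsmem.1.2⟩, MeasureTheory.integral_undef hni, add_zero]
      exact aestronglyMeasurable_const.congr (Filter.EventuallyEq.symm hae)
  -- hence f is integrable on (a, b], so b ∈ A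
  have hfmeas : AEStronglyMeasurable f (volume.restrict (Ioc a b)) := by
    have : AEStronglyMeasurable (fun r => (u r, r)) (volume.restrict (Ioc a b)) :=
      humeas.prodMk aestronglyMeasurable_id
    exact hG.comp_aestronglyMeasurable this
  have hbA : b ∈ A := by
    refine ⟨right_mem_Icc.2 hab, ?_⟩
    refine Integrable.mono' (g := fun _ => C) ?_ hfmeas ?_
    · exact integrableOn_const (by rw [Real.volume_Ioc]; exact ENNReal.ofReal_ne_top)
    · filter_upwards [ae_restrict_mem measurableSet_Ioc] with r hr
      exact hGb (u r) r ⟨hr.1.le, hr.2⟩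
  have hAeq : Icc a b ⊆ A := fun s hs => hAdc b hbA s hs.1 hs.2
  exact (hlipOn.continuousOn).mono hAeq

/-- One-sided FTC: a function satisfying an integral equation with continuous integrand
has right derivatives on `[a,b)`. -/
lemma hasDerivWithinAt_of_integral_eq {f : ℝ → ℝ} {a b c : ℝ}
    (hf : ContinuousOn f (Icc a b)) {u : ℝ → ℝ}
    (hu : ∀ s ∈ Icc a b, u s = c + ∫ r in a..s, f r) :
    ∀ t ∈ Ico a b, HasDerivWithinAt u (f t) (Ici t) t := by
  intro t ht
  have hmem : Icc a b ∈ 𝓝[Ici t] t := by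
    refine mem_nhdsWithin.2 ⟨Iio b, isOpen_Iio, ht.2, ?_⟩
    rintro s ⟨hs1, hs2⟩
    exact ⟨ht.1.trans hs2, le_of_lt hs1⟩
  have hmem' : Icc a b ∈ 𝓝[Ioi t] t :=
    nhdsWithin_mono t Ioi_subset_Ici_self hmem
  have hint : IntervalIntegrable f volume a t :=
    (hf.mono (Icc_subset_Icc le_rfl ht.2.le)).intervalIntegrable_of_Icc ht.1
  have hmeas : StronglyMeasurableAtFilter f (𝓝[Ioi t] t) :=
    ⟨Icc a b, hmem', hf.aestronglyMeasurable measurableSet_Icc⟩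
  have hcont : ContinuousWithinAt f (Ioi t) t :=
    (hf.continuousWithinAt ⟨ht.1, ht.2.le⟩).mono_of_mem_nhdsWithin hmem'
  have hd : HasDerivWithinAt (fun s => ∫ r in a..s, f r) (f t) (Ici t) t :=
    intervalIntegral.integral_hasDerivWithinAt_right hint hmeas hcont
  exact (hd.const_add c).congr_of_eventuallyEq
    (eventually_of_mem hmem fun s hs => hu s hs) (hu t ⟨ht.1, ht.2.le⟩)

lemma lip_of_deriv_bound {E : Type*} [NormedAddCommGroup E] [NormedSpace ℝ E] {f : ℝ → E}
    (hf : Differentiable ℝ f) {M : ℝ} (hM : ∀ z, ‖deriv f z‖ ≤ M) (v w : ℝ) :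
    ‖f v - f w‖ ≤ M * |v - w| := by
  have := Convex.norm_image_sub_le_of_norm_deriv_le (s := (univ : Set ℝ))
    (fun z _ => hf z) (fun z _ => hM z) convex_univ (mem_univ w) (mem_univ v)
  simpa [Real.norm_eq_abs] using this

lemma mem_uIcc_abs_le {z w v : ℝ} (hz : z ∈ uIcc w v) : |z - w| ≤ |v - w| := by
  rcases Set.mem_uIcc.1 hz with ⟨h1, h2⟩ | ⟨h1, h2⟩
  · rw [abs_of_nonneg (by linarith)]
    calc z - w ≤ v - w := by linarith
      _ ≤ |v - w| := le_abs_self _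
  · rw [abs_of_nonpos (by linarith)]
    calc -(z - w) ≤ -(v - w) := by linarith
      _ ≤ |v - w| := neg_le_abs _

lemma taylor_of_deriv2 {E : Type*} [NormedAddCommGroup E] [NormedSpace ℝ E] {f : ℝ → E}
    (hf : Differentiable ℝ f) (hf' : Differentiable ℝ (deriv f)) {M : ℝ}
    (hM : ∀ z, ‖deriv (deriv f) z‖ ≤ M) (v w : ℝ) :
    ‖f v - f w - (v - w) • deriv f w‖ ≤ M * |v - w| * |v - w| := by
  set φ : ℝ → E := fun z => f z - z • deriv f w with hφ
  have hφd : ∀ z, HasDerivAt φ (deriv f z - deriv f w) z := by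
    intro z
    have h1 : HasDerivAt (fun y : ℝ => y • deriv f w) ((1:ℝ) • deriv f w) z :=
      (hasDerivAt_id z).smul_const (deriv f w)
    rw [one_smul] at h1
    exact ((hf z).hasDerivAt).sub h1
  have hbound : ∀ z ∈ uIcc w v, ‖deriv φ z‖ ≤ M * |v - w| := by
    intro z hz
    rw [(hφd z).deriv]
    calc ‖deriv f z - deriv f w‖ ≤ M * |z - w| := lip_of_deriv_bound hf' hM z w
      _ ≤ M * |v - w| := by
          have hMnn : 0 ≤ M := (norm_nonneg _).trans (hM 0)
          exact mul_le_mul_of_nonneg_left (mem_uIcc_abs_le hz) hMnn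
  have := Convex.norm_image_sub_le_of_norm_deriv_le (s := uIcc w v)
    (fun z _ => (hφd z).differentiableAt) hbound (convex_uIcc w v)
    (left_mem_uIcc) (right_mem_uIcc)
  have hφeq : φ v - φ w = f v - f w - (v - w) • deriv f w := by
    rw [hφ]; simp only [sub_smul]; abel
  rw [hφeq, Real.norm_eq_abs] at this
  exact this


set_option maxHeartbeats 1000000 in
/-- Let `H ∈ C²_b(ℝ, ℝ^d)`, `ω` a `C¹` path and let `x` solve `x(t) = ∫_0^t H(x(r))·dω(r)`.
Let `X h` be the solution driven by the perturbed path `ω + h·1_{[τ,T]}` (the jump at `τ`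
contributing `H(x(τ))·h`).  Then `φ(t,ω) := x(t)` is strongly vertically differentiable at
every `(τ,t,ω)` with `τ ≤ t`, with derivative `y(t) = ∂_{ω_τ}φ(t,ω)` solving the linear ODE
`y(t) = H(x(τ)) + ∫_τ^t y(r) H'(x(r))·dω(r)` for `t ≥ τ`. -/
theorem stmt_6 {d : ℕ} (T : ℝ) (hT : 0 < T)
    (H : ℝ → EV d) (hH : ContDiff ℝ 2 H)
    (hHb : ∃ M : ℝ, ∀ u : ℝ, ‖H u‖ ≤ M ∧ ‖deriv H u‖ ≤ M ∧ ‖deriv (deriv H) u‖ ≤ M)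
    (ω : ℝ → EV d) (hω : ContDiff ℝ 1 ω)
    (τ : ℝ) (hτ : 0 ≤ τ) (hτT : τ ≤ T)
    (x : ℝ → ℝ)
    (hx : ∀ s ∈ Icc (0:ℝ) T, x s = ∫ r in (0:ℝ)..s, ⟪H (x r), deriv ω r⟫)
    (X : EV d → ℝ → ℝ)
    (hXpast : ∀ (h : EV d) (s : ℝ), s < τ → X h s = x s)
    (hXeq : ∀ (h : EV d), ∀ s ∈ Icc τ T,
      X h s = x τ + ⟪H (x τ), h⟫ + ∫ r in τ..s, ⟪H (X h r), deriv ω r⟫) :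
    ∃ y : ℝ → EV d,
      (∀ s ∈ Icc τ T,
        y s = H (x τ) + ∫ r in τ..s, (⟪deriv H (x r), deriv ω r⟫ : ℝ) • y r) ∧
      ∀ s ∈ Icc τ T, HasFDerivAt (fun h : EV d => X h s) (innerSL ℝ (y s)) 0 := by
  classical
  obtain ⟨M, hM⟩ := hHb
  have hMnn : 0 ≤ M := (norm_nonneg _).trans (hM 0).1
  have hωc : Continuous (deriv ω) := hω.continuous_deriv le_rfl
  obtain ⟨K₀, hK₀⟩ := (isCompact_Icc (a := (0:ℝ)) (b := T)).exists_bound_of_continuousOn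
    hωc.continuousOn
  set K : ℝ := max K₀ 0 with hKdef
  have hKnn : 0 ≤ K := le_max_right _ _
  have hKb : ∀ r ∈ Icc (0:ℝ) T, ‖deriv ω r‖ ≤ K := fun r hr => (hK₀ r hr).trans (le_max_left _ _)
  have hHd : Differentiable ℝ H := hH.differentiable two_ne_zero
  have hH1 : ContDiff ℝ 1 (deriv H) := by
    have h2 : ContDiff ℝ ((1 : ℕ) + 1) H := by exact_mod_cast hH
    exact (contDiff_succ_iff_deriv.mp h2).2.2
  have hHdd : Differentiable ℝ (deriv H) := hH1.differentiable one_ne_zero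
  have hHc' : Continuous (deriv H) := hH1.continuous
  set G : ℝ → ℝ → ℝ := fun v r => ⟪H v, deriv ω r⟫ with hGdef
  have hGcont : Continuous fun p : ℝ × ℝ => G p.1 p.2 :=
    (hH.continuous.comp continuous_fst).inner (hωc.comp continuous_snd)
  have hGb : ∀ v : ℝ, ∀ r ∈ Icc (0:ℝ) T, |G v r| ≤ M * K := by
    intro v r hr
    calc |G v r| ≤ ‖H v‖ * ‖deriv ω r‖ := abs_real_inner_le_norm _ _
      _ ≤ M * K := mul_le_mul (hM v).1 (hKb r hr) (norm_nonneg _) hMnn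
  have hIccsub : Icc τ T ⊆ Icc 0 T := Icc_subset_Icc hτ le_rfl
  have hGb' : ∀ v : ℝ, ∀ r ∈ Icc τ T, |G v r| ≤ M * K := fun v r hr => hGb v r (hIccsub hr)
  -- continuity of x
  have hxcont : ContinuousOn x (Icc 0 T) := by
    apply bootstrap_cont hGcont hGb hT.le
    intro s hs; rw [zero_add]; exact hx s hs
  have hfx : ContinuousOn (fun r => G (x r) r) (Icc 0 T) :=
    hGcont.comp_continuousOn (hxcont.prodMk continuousOn_id)
  -- x solves the equation restarted at τ
  have hxeqτ : ∀ s ∈ Icc τ T, x s = x τ + ∫ r in τ..s, G (x r) r := by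
    intro s hs
    have h1 : IntervalIntegrable (fun r => G (x r) r) volume 0 τ :=
      (hfx.mono (Icc_subset_Icc le_rfl hτT)).intervalIntegrable_of_Icc hτ
    have h2 : IntervalIntegrable (fun r => G (x r) r) volume τ s :=
      (hfx.mono (Icc_subset_Icc hτ hs.2)).intervalIntegrable_of_Icc hs.1
    have hadd := intervalIntegral.integral_add_adjacent_intervals h1 h2
    rw [hx s ⟨hτ.trans hs.1, hs.2⟩, hx τ ⟨hτ, hτT⟩, ← hadd]
  have hxd : ∀ t ∈ Ico τ T, HasDerivWithinAt x (G (x t) t) (Ici t) t :=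
    hasDerivWithinAt_of_integral_eq (hfx.mono hIccsub) hxeqτ
  -- continuity and derivative of X h
  have hXeq' : ∀ (h : EV d), ∀ s ∈ Icc τ T,
      X h s = (x τ + ⟪H (x τ), h⟫) + ∫ r in τ..s, G (X h r) r := by
    intro h s hs; rw [hXeq h s hs]
  have hXcont : ∀ h : EV d, ContinuousOn (X h) (Icc τ T) := fun h =>
    bootstrap_cont hGcont hGb' hτT (hXeq' h)
  have hfX : ∀ h : EV d, ContinuousOn (fun r => G (X h r) r) (Icc τ T) := fun h =>
    hGcont.comp_continuousOn (f := fun r => (X h r, r)) ((hXcont h).prodMk continuousOn_id)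
  have hXd : ∀ (h : EV d), ∀ t ∈ Ico τ T, HasDerivWithinAt (X h) (G (X h t) t) (Ici t) t :=
    fun h => hasDerivWithinAt_of_integral_eq (hfX h) (hXeq' h)
  have hXτ : ∀ h : EV d, X h τ = x τ + ⟪H (x τ), h⟫ := by
    intro h
    rw [hXeq' h τ (left_mem_Icc.2 hτT), intervalIntegral.integral_same, add_zero]
  -- Lipschitz and Taylor estimates for H
  have hHlip : ∀ v w : ℝ, ‖H v - H w‖ ≤ M * |v - w| :=
    lip_of_deriv_bound hHd (fun z => (hM z).2.1)
  have hHtay : ∀ v w : ℝ, ‖H v - H w - (v - w) • deriv H w‖ ≤ M * |v - w| * |v - w| :=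
    taylor_of_deriv2 hHd hHdd (fun z => (hM z).2.2)
  -- first Gronwall estimate: |X h - x| ≤ C₁ ‖h‖
  set C₁ : ℝ := M * Real.exp (M * K * T) with hC₁def
  have hC₁nn : 0 ≤ C₁ := mul_nonneg hMnn (Real.exp_pos _).le
  have key1 : ∀ (h : EV d), ∀ t ∈ Icc τ T, |X h t - x t| ≤ C₁ * ‖h‖ := by
    intro h t ht
    have hcont : ContinuousOn (fun s => X h s - x s) (Icc τ T) :=
      (hXcont h).sub (hxcont.mono hIccsub)
    have hder : ∀ s ∈ Ico τ T,
        HasDerivWithinAt (fun s => X h s - x s) (G (X h s) s - G (x s) s) (Ici s) s :=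
      fun s hs => (hXd h s hs).sub (hxd s hs)
    have hinit : ‖X h τ - x τ‖ ≤ M * ‖h‖ := by
      rw [hXτ h]
      have : x τ + ⟪H (x τ), h⟫ - x τ = ⟪H (x τ), h⟫ := by ring
      rw [this, Real.norm_eq_abs]
      calc |(⟪H (x τ), h⟫ : ℝ)| ≤ ‖H (x τ)‖ * ‖h‖ := abs_real_inner_le_norm _ _
        _ ≤ M * ‖h‖ := mul_le_mul_of_nonneg_right (hM _).1 (norm_nonneg _)
    have hbound : ∀ s ∈ Ico τ T,
        ‖G (X h s) s - G (x s) s‖ ≤ (M * K) * ‖X h s - x s‖ + 0 := by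
      intro s hs
      have hsmem : s ∈ Icc (0:ℝ) T := ⟨hτ.trans hs.1, hs.2.le⟩
      rw [add_zero, Real.norm_eq_abs, Real.norm_eq_abs]
      have : G (X h s) s - G (x s) s = ⟪H (X h s) - H (x s), deriv ω s⟫ := by
        rw [hGdef]; simp [inner_sub_left]
      rw [this]
      calc |(⟪H (X h s) - H (x s), deriv ω s⟫ : ℝ)|
          ≤ ‖H (X h s) - H (x s)‖ * ‖deriv ω s‖ := abs_real_inner_le_norm _ _
        _ ≤ (M * |X h s - x s|) * K := by
            apply mul_le_mul (hHlip _ _) (hKb s hsmem) (norm_nonneg _)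
            positivity
        _ = (M * K) * |X h s - x s| := by ring
    have hg := norm_le_gronwallBound_of_norm_deriv_right_le hcont hder hinit hbound t ht
    rw [gronwallBound_ε0, Real.norm_eq_abs] at hg
    calc |X h t - x t| ≤ M * ‖h‖ * Real.exp (M * K * (t - τ)) := hg
      _ ≤ M * ‖h‖ * Real.exp (M * K * T) := by
          apply mul_le_mul_of_nonneg_left _ (mul_nonneg hMnn (norm_nonneg h))
          exact Real.exp_le_exp.2
            (mul_le_mul_of_nonneg_left (by linarith [ht.2]) (mul_nonneg hMnn hKnn))
      _ = C₁ * ‖h‖ := by rw [hC₁def]; ring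
  -- uniqueness : X 0 = x on [τ, T]
  have hX0 : ∀ t ∈ Icc τ T, X 0 t = x t := by
    intro t ht
    have := key1 0 t ht
    simp only [norm_zero, mul_zero] at this
    have h0 : |X 0 t - x t| = 0 := le_antisymm this (abs_nonneg _)
    have := abs_eq_zero.1 h0
    linarith [sub_eq_zero.1 this]
  -- the linear-equation data
  set g : ℝ → ℝ := fun r => ⟪deriv H (x r), deriv ω r⟫ with hgdef
  have hgcont : ContinuousOn g (Icc 0 T) :=
    (hHc'.comp_continuousOn hxcont).inner hωc.continuousOn
  have hgb : ∀ r ∈ Icc (0:ℝ) T, |g r| ≤ M * K := by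
    intro r hr
    calc |g r| ≤ ‖deriv H (x r)‖ * ‖deriv ω r‖ := abs_real_inner_le_norm _ _
      _ ≤ M * K := mul_le_mul (hM _).2.1 (hKb r hr) (norm_nonneg _) hMnn
  set P : ℝ → ℝ := fun s => ∫ r in τ..s, g r with hPdef
  have hgτT : ContinuousOn g (Icc τ T) := hgcont.mono hIccsub
  have hPcont : ContinuousOn P (Icc τ T) := by
    rw [show Icc τ T = uIcc τ T from (uIcc_of_le hτT).symm]
    exact intervalIntegral.continuousOn_primitive_interval
      (by rw [uIcc_of_le hτT]; exact hgτT.integrableOn_Icc)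
  have hPd : ∀ t ∈ Ico τ T, HasDerivWithinAt P (g t) (Ici t) t :=
    hasDerivWithinAt_of_integral_eq hgτT (fun s _ => (zero_add _).symm)
  set E : ℝ → ℝ := fun s => Real.exp (P s) with hEdef
  have hEcont : ContinuousOn E (Icc τ T) := Real.continuous_exp.comp_continuousOn hPcont
  have hPτ : P τ = 0 := intervalIntegral.integral_same
  have hEτ : E τ = 1 := by rw [hEdef]; simp [hPτ]
  set v : EV d := H (x τ) with hvdef
  refine ⟨fun s => E s • v, ?_, ?_⟩
  · -- y solves the linear integral equation
    intro s hs
    have hEs : ContinuousOn E (Icc τ s) := hEcont.mono (Icc_subset_Icc le_rfl hs.2)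
    have hEd : ∀ r ∈ Ioo τ s, HasDerivWithinAt E (E r * g r) (Ioi r) r := by
      intro r hr
      have hrI : r ∈ Ico τ T := ⟨hr.1.le, hr.2.trans_le hs.2⟩
      exact ((hPd r hrI).exp).mono Ioi_subset_Ici_self
    have hint : IntervalIntegrable (fun r => E r * g r) volume τ s :=
      (hEs.mul (hgτT.mono (Icc_subset_Icc le_rfl hs.2))).intervalIntegrable_of_Icc hs.1
    have hftc := intervalIntegral.integral_eq_sub_of_hasDeriv_right_of_le hs.1 hEs hEd hint
    rw [hEτ] at hftc
    have : (∫ r in τ..s, g r • (E r • v)) = (∫ r in τ..s, E r * g r) • v := by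
      rw [← intervalIntegral.integral_smul_const]
      congr 1; funext r; rw [smul_smul, mul_comm]
    rw [this, hftc, sub_smul, one_smul]
    abel
  · -- differentiability
    intro s hs
    -- quadratic remainder estimate
    set C₂ : ℝ := M * K * C₁ ^ 2 * Real.exp ((M * K + 1) * T) with hC₂def
    have hC₂nn : 0 ≤ C₂ := by positivity
    have key2 : ∀ (h : EV d), ∀ t ∈ Icc τ T,
        |X h t - x t - E t * ⟪v, h⟫| ≤ C₂ * ‖h‖ ^ 2 := by
      intro h t ht
      have hRcont : ContinuousOn (fun z => X h z - x z - E z * ⟪v, h⟫) (Icc τ T) :=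
        ((hXcont h).sub (hxcont.mono hIccsub)).sub (hEcont.mul continuousOn_const)
      have hRτ : X h τ - x τ - E τ * ⟪v, h⟫ = 0 := by
        rw [hXτ h, hEτ, hvdef]; ring
      have hRder : ∀ z ∈ Ico τ T, HasDerivWithinAt (fun z => X h z - x z - E z * ⟪v, h⟫)
          ((G (X h z) z - G (x z) z) - (E z * g z) * ⟪v, h⟫) (Ici z) z := by
        intro z hz
        exact ((hXd h z hz).sub (hxd z hz)).sub (((hPd z hz).exp).mul_const _)
      have hbound : ∀ z ∈ Ico τ T,
          ‖(G (X h z) z - G (x z) z) - (E z * g z) * ⟪v, h⟫‖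
            ≤ (M * K + 1) * ‖X h z - x z - E z * ⟪v, h⟫‖ + M * K * C₁ ^ 2 * ‖h‖ ^ 2 := by
        intro z hz
        have hz0T : z ∈ Icc (0:ℝ) T := ⟨hτ.trans hz.1, hz.2.le⟩
        have hzτT : z ∈ Icc τ T := ⟨hz.1, hz.2.le⟩
        set e : ℝ := X h z - x z with hedef
        have hsplit : (G (X h z) z - G (x z) z) - (E z * g z) * ⟪v, h⟫
            = (⟪H (X h z) - H (x z) - e • deriv H (x z), deriv ω z⟫ : ℝ)
              + g z * (X h z - x z - E z * ⟪v, h⟫) := by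
          rw [hGdef, hgdef]
          simp only [inner_sub_left, real_inner_smul_left]
          ring
        have htaylor : |(⟪H (X h z) - H (x z) - e • deriv H (x z), deriv ω z⟫ : ℝ)|
            ≤ M * K * C₁ ^ 2 * ‖h‖ ^ 2 := by
          have h1 : ‖H (X h z) - H (x z) - e • deriv H (x z)‖ ≤ M * |e| * |e| := by
            have := hHtay (X h z) (x z)
            simpa [hedef] using this
          have h2 : |e| ≤ C₁ * ‖h‖ := key1 h z hzτT
          calc |(⟪H (X h z) - H (x z) - e • deriv H (x z), deriv ω z⟫ : ℝ)|
              ≤ ‖H (X h z) - H (x z) - e • deriv H (x z)‖ * ‖deriv ω z‖ :=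
                abs_real_inner_le_norm _ _
            _ ≤ (M * |e| * |e|) * K := by
                apply mul_le_mul h1 (hKb z hz0T) (norm_nonneg _); positivity
            _ ≤ (M * (C₁ * ‖h‖) * (C₁ * ‖h‖)) * K := by
                have habs : 0 ≤ |e| := abs_nonneg _
                gcongr
            _ = M * K * C₁ ^ 2 * ‖h‖ ^ 2 := by ring
        rw [hsplit, Real.norm_eq_abs, Real.norm_eq_abs]
        calc |(⟪H (X h z) - H (x z) - e • deriv H (x z), deriv ω z⟫ : ℝ)
              + g z * (X h z - x z - E z * ⟪v, h⟫)|
            ≤ |(⟪H (X h z) - H (x z) - e • deriv H (x z), deriv ω z⟫ : ℝ)|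
              + |g z * (X h z - x z - E z * ⟪v, h⟫)| := abs_add_le _ _
          _ ≤ M * K * C₁ ^ 2 * ‖h‖ ^ 2
              + (M * K) * |X h z - x z - E z * ⟪v, h⟫| := by
              rw [abs_mul]
              exact add_le_add htaylor
                (mul_le_mul_of_nonneg_right (hgb z hz0T) (abs_nonneg _))
          _ ≤ (M * K + 1) * |X h z - x z - E z * ⟪v, h⟫| + M * K * C₁ ^ 2 * ‖h‖ ^ 2 := by
              nlinarith [abs_nonneg (X h z - x z - E z * ⟪v, h⟫)]
      have hinit : ‖X h τ - x τ - E τ * ⟪v, h⟫‖ ≤ 0 := by rw [hRτ]; simp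
      have hg := norm_le_gronwallBound_of_norm_deriv_right_le hRcont hRder hinit hbound t ht
      have hKne : (M * K + 1) ≠ 0 := by positivity
      rw [gronwallBound_of_K_ne_0 hKne] at hg
      simp only [zero_mul, zero_add] at hg
      rw [Real.norm_eq_abs] at hg
      set ε : ℝ := M * K * C₁ ^ 2 * ‖h‖ ^ 2 with hεdef
      have hεnn : 0 ≤ ε := by positivity
      have hstep : ε / (M * K + 1) * (Real.exp ((M * K + 1) * (t - τ)) - 1)
          ≤ ε * Real.exp ((M * K + 1) * T) := by
        have h1 : ε / (M * K + 1) ≤ ε := by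
          apply div_le_self hεnn; nlinarith [mul_nonneg hMnn hKnn]
        have h2 : Real.exp ((M * K + 1) * (t - τ)) - 1 ≤ Real.exp ((M * K + 1) * T) := by
          have : Real.exp ((M * K + 1) * (t - τ)) ≤ Real.exp ((M * K + 1) * T) :=
            Real.exp_le_exp.2 (by nlinarith [ht.2, hτ, mul_nonneg hMnn hKnn])
          linarith
        have h3 : 0 ≤ Real.exp ((M * K + 1) * (t - τ)) - 1 := by
          have harg : (0:ℝ) ≤ (M * K + 1) * (t - τ) := by
            nlinarith [ht.1, mul_nonneg hMnn hKnn]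
          have := Real.add_one_le_exp ((M * K + 1) * (t - τ))
          linarith
        calc ε / (M * K + 1) * (Real.exp ((M * K + 1) * (t - τ)) - 1)
            ≤ ε * (Real.exp ((M * K + 1) * (t - τ)) - 1) := by
              apply mul_le_mul_of_nonneg_right h1 h3
          _ ≤ ε * Real.exp ((M * K + 1) * T) := by
              apply mul_le_mul_of_nonneg_left _ hεnn
              have : Real.exp ((M * K + 1) * (t - τ)) ≤ Real.exp ((M * K + 1) * T) :=
                Real.exp_le_exp.2 (by nlinarith [ht.2, hτ, mul_nonneg hMnn hKnn])
              linarith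
      calc |X h t - x t - E t * ⟪v, h⟫| ≤ _ := hg
        _ ≤ ε * Real.exp ((M * K + 1) * T) := hstep
        _ = C₂ * ‖h‖ ^ 2 := by rw [hεdef, hC₂def]; ring
    -- conclude the Fréchet differentiability
    rw [hasFDerivAt_iff_isLittleO_nhds_zero]
    have hfun : ∀ h : EV d, X (0 + h) s - X 0 s - (innerSL ℝ (E s • v)) h
        = X h s - x s - E s * ⟪v, h⟫ := by
      intro h
      rw [zero_add, hX0 s hs]
      congr 1
      rw [innerSL_apply_apply, real_inner_smul_left]
    rw [Asymptotics.isLittleO_iff]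
    intro c hc
    have hδpos : 0 < c / (C₂ + 1) := by positivity
    filter_upwards [Metric.ball_mem_nhds (0 : EV d) hδpos] with h hh
    rw [hfun h, Real.norm_eq_abs]
    have hhn : ‖h‖ < c / (C₂ + 1) := by
      rwa [Metric.mem_ball, dist_zero_right] at hh
    have hkey : ‖h‖ * (C₂ + 1) < c := (lt_div_iff₀ (by positivity)).mp hhn
    calc |X h s - x s - E s * ⟪v, h⟫| ≤ C₂ * ‖h‖ ^ 2 := key2 h s hs
      _ ≤ c * ‖h‖ := by nlinarith [norm_nonneg h, hC₂nn, hkey]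
end
end
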